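/- arXiv:0910.3830 — 2 statements merged into one kernel-verified Lean document; each statement's English description precedes it below -/
import Mathlib

section
/- Let I be an almost reverse lexicographic ideal in R = k[x_1,...,x_n] with max M_ω(I) = n. Then min{t : x_{n-1}^t ∈ I} = min{d : H(R/I,d) ≤ H(R/I,d-1)}. -/
open scoped Classical

/-- Degree of an exponent vector (monomial). -/
def mdeg {n : ℕ} (m : Fin n → ℕ) : ℕ := ∑ i, m i

/-- Degree reverse lexicographic order: `M > N`. -/
def RevLexGT {n : ℕ} (M N : Fin n → ℕ) : Prop :=
  mdeg N < mdeg M ∨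
    (mdeg M = mdeg N ∧ ∃ s : Fin n, (∀ i : Fin n, s < i → M i = N i) ∧ M s < N s)

/-- A monomial ideal, identified with its set of monomials (exponent vectors),
is upward closed under divisibility. -/
def MonIdeal {n : ℕ} (I : Set (Fin n → ℕ)) : Prop :=
  ∀ m ∈ I, ∀ m' : Fin n → ℕ, (∀ i, m i ≤ m' i) → m' ∈ I

/-- `m` is a minimal generator of the monomial ideal `I`. -/
def MinGen {n : ℕ} (I : Set (Fin n → ℕ)) (m : Fin n → ℕ) : Prop :=
  m ∈ I ∧ ∀ m' ∈ I, (∀ i, m' i ≤ m i) → m' = m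

/-- Almost reverse lexicographic ideal. -/
def ARL {n : ℕ} (I : Set (Fin n → ℕ)) : Prop :=
  ∀ M N : Fin n → ℕ, MinGen I N → mdeg M = mdeg N → RevLexGT M N → M ∈ I

/-- Strongly stable monomial ideal. -/
def StronglyStable {n : ℕ} (I : Set (Fin n → ℕ)) : Prop :=
  MonIdeal I ∧ ∀ M ∈ I, ∀ i j : Fin n, j < i → 0 < M i →
    (fun k => if k = i then M i - 1 else if k = j then M j + 1 else M k) ∈ I

/-- The last generator `M_ω` of a monomial ideal: a minimal generator of maximal
degree which is smallest in the degree reverse lexicographic order among the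
minimal generators of that degree. -/
def IsLastGen {n : ℕ} (I : Set (Fin n → ℕ)) (W : Fin n → ℕ) : Prop :=
  MinGen I W ∧ (∀ N, MinGen I N → mdeg N ≤ mdeg W) ∧
    (∀ N, MinGen I N → mdeg N = mdeg W → N = W ∨ RevLexGT N W)

/-- `max M`: the largest (1-based) index of a variable dividing `M` (0 for `M = 1`). -/
def maxVar {n : ℕ} (m : Fin n → ℕ) : ℕ :=
  Finset.univ.sup (fun i : Fin n => if 0 < m i then i.1 + 1 else 0)

/-- Hilbert function of `R/I`: the number of monomials of degree `d` not in `I`. -/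
noncomputable def hilb {n : ℕ} (I : Set (Fin n → ℕ)) (d : ℕ) : ℕ :=
  Set.ncard {m : Fin n → ℕ | mdeg m = d ∧ m ∉ I}

/-- Truncation of an exponent vector to its first `i` coordinates. -/
def truncW {n : ℕ} (W : Fin n → ℕ) (i : ℕ) : Fin n → ℕ :=
  fun j => if j.1 < i then W j else 0

/-- The set `𝓘_i` (for `i ≤ μ-2`): exponent vectors supported on the first `i`
coordinates, coordinatewise below the `f_j`'s, i.e. not lying in `I`. -/
def Iset {n : ℕ} (I : Set (Fin n → ℕ)) (i : ℕ) : Set (Fin n → ℕ) :=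
  {α | (∀ k : Fin n, i ≤ k.1 → α k = 0) ∧ α ∉ I}

/-- The set `𝓘_{μ-1}`, which additionally requires `α ≥ (ω_1,…,ω_{μ-1})`. -/
def IsetLast {n : ℕ} (I : Set (Fin n → ℕ)) (W : Fin n → ℕ) (μ : ℕ) :
    Set (Fin n → ℕ) :=
  {α | α ∈ Iset I (μ - 1) ∧ (α = truncW W (μ - 1) ∨ RevLexGT α (truncW W (μ - 1)))}

/-- `f_{i+1}(α) = min {t : x^α x_{i+1}^t ∈ I}` (ℕ-valued, junk `0` if no such `t`). -/
noncomputable def fmin {n : ℕ} (I : Set (Fin n → ℕ)) (α : Fin n → ℕ) (i : Fin n) : ℕ :=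
  sInf {t | α + Pi.single i t ∈ I}

/-- `f_{i+1}(α)` valued in `ℕ∞` (equal to `⊤` when no power works). -/
noncomputable def fminTop {n : ℕ} (I : Set (Fin n → ℕ)) (α : Fin n → ℕ) (i : Fin n) : ℕ∞ :=
  sInf ((fun t : ℕ => (t : ℕ∞)) '' {t | α + Pi.single i t ∈ I})

/-- Iterated truncated difference sequence `h^{(i)}`. -/
def hseq (h : ℕ → ℕ) : ℕ → ℕ → ℕ
  | 0, d => h d
  | _ + 1, 0 => 1
  | i + 1, e + 1 => hseq h i (e + 1) - hseq h i e

/-- The set whose infimum is `r_i(h)`. -/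
def rset (h : ℕ → ℕ) (i : ℕ) : Set ℕ :=
  {d | 1 ≤ d ∧ hseq h i d ≤ hseq h i (d - 1)}

/-- `D(h) = min {i : r_i < ∞}`. -/
noncomputable def Dval (h : ℕ → ℕ) : ℕ := sInf {i | (rset h i).Nonempty}

/-- `h` is unimodal at each tail. -/
def UnimodalAtTails (h : ℕ → ℕ) : Prop :=
  ∀ i, Dval h ≤ i → i < max 1 (h 1) →
    ∀ d, (∃ r ∈ rset h i, r ≤ d) → hseq h i d ≤ hseq h i (d - 1)

/-- The polynomial `Π (1 - z^{d_i})`. -/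
noncomputable def froPoly (ds : List ℕ) : Polynomial ℤ :=
  (ds.map (fun d => 1 - Polynomial.X ^ d)).prod

/-- Coefficient of `z^i` in the power series `Π (1 - z^{d_i}) / (1-z)^n`. -/
noncomputable def froCoeff (n : ℕ) (ds : List ℕ) (i : ℕ) : ℤ :=
  ∑ j ∈ Finset.range (i + 1),
    (froPoly ds).coeff j * (Nat.choose (n - 1 + (i - j)) (i - j) : ℤ)

/-- The Fröberg sequence `|n; d_1,…,d_m|`: the truncation `| · |` of the power
series `Π (1 - z^{d_i}) / (1-z)^n`. -/
noncomputable def fro (n : ℕ) (ds : List ℕ) (i : ℕ) : ℕ :=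
  if ∀ j ≤ i, 0 < froCoeff n ds j then (froCoeff n ds i).toNat else 0

section ArlAux

variable {n : ℕ}

lemma mdeg_mono {m m' : Fin n → ℕ} (h : ∀ i, m i ≤ m' i) : mdeg m ≤ mdeg m' :=
  Finset.sum_le_sum fun i _ => h i

lemma mdeg_single (i : Fin n) (t : ℕ) : mdeg (Pi.single i t) = t := by
  simp [mdeg]

lemma coord_le_mdeg (m : Fin n → ℕ) (i : Fin n) : m i ≤ mdeg m :=
  Finset.single_le_sum (f := m) (fun _ _ => Nat.zero_le _) (Finset.mem_univ i)

lemma eq_of_le_of_mdeg_le {m m' : Fin n → ℕ} (h : ∀ i, m i ≤ m' i)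
    (hd : mdeg m' ≤ mdeg m) : m = m' := by
  funext i
  by_contra hne
  have hlt : m i < m' i := lt_of_le_of_ne (h i) hne
  have : mdeg m < mdeg m' :=
    Finset.sum_lt_sum (fun j _ => h j) ⟨i, Finset.mem_univ i, hlt⟩
  omega

lemma exists_minGen {I : Set (Fin n → ℕ)} {M : Fin n → ℕ} (hM : M ∈ I) :
    ∃ N, MinGen I N ∧ ∀ i, N i ≤ M i := by
  set T : Set ℕ := {e | ∃ m ∈ I, (∀ i, m i ≤ M i) ∧ mdeg m = e} with hT
  have hne : mdeg M ∈ T := ⟨M, hM, fun i => le_rfl, rfl⟩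
  obtain ⟨m, hmI, hmle, hmd⟩ := Nat.sInf_mem ⟨_, hne⟩
  refine ⟨m, ⟨hmI, ?_⟩, hmle⟩
  intro m' hm' hle
  have hmem : mdeg m' ∈ T := ⟨m', hm', fun i => (hle i).trans (hmle i), rfl⟩
  have h1 : sInf T ≤ mdeg m' := Nat.sInf_le hmem
  exact eq_of_le_of_mdeg_le hle (by omega)

lemma hilbset_finite (I : Set (Fin n → ℕ)) (d : ℕ) :
    {m : Fin n → ℕ | mdeg m = d ∧ m ∉ I}.Finite := by
  have hbox : (Set.pi Set.univ fun _ : Fin n => Set.Iic d).Finite :=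
    Set.Finite.pi fun _ => Set.finite_Iic d
  refine hbox.subset ?_
  rintro m ⟨hd, -⟩ i -
  exact le_of_le_of_eq (coord_le_mdeg m i) hd

end ArlAux

section ArlMain

variable {n : ℕ}

/-- index of the second-to-last variable -/
private def secv (n : ℕ) : Fin (n + 2) := ⟨n, by omega⟩
/-- index of the last variable -/
private def lastv (n : ℕ) : Fin (n + 2) := ⟨n + 1, by omega⟩

private lemma lastv_ne_secv : lastv n ≠ secv n := by
  simp [lastv, secv, Fin.ext_iff]

private lemma secv_ne_lastv : secv n ≠ lastv n := (lastv_ne_secv).symm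

/-- KEY FACT 1: a minimal generator divisible by the last variable forces the
corresponding pure power of the second-to-last variable into `I`. -/
lemma powSec_mem_of_gen {I : Set (Fin (n + 2) → ℕ)} (hARL : ARL I)
    {g : Fin (n + 2) → ℕ} (hg : MinGen I g) (hgl : 0 < g (lastv n)) :
    Pi.single (secv n) (mdeg g) ∈ I := by
  apply hARL _ g hg (mdeg_single _ _)
  right
  refine ⟨mdeg_single _ _, lastv n, ?_, ?_⟩
  · intro i hi
    exact absurd i.isLt (by have := hi; simp [lastv, Fin.lt_def] at this ⊢; omega)
  · rw [Pi.single_eq_of_ne lastv_ne_secv]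
    exact hgl

/-- If `x_sec^d ∉ I`, multiplying a non-element of degree `d-1` by the last
variable stays outside `I`. -/
lemma add_last_notMem {I : Set (Fin (n + 2) → ℕ)} (hI : MonIdeal I) (hARL : ARL I)
    {d : ℕ} (hnot : Pi.single (secv n) d ∉ I)
    {m : Fin (n + 2) → ℕ} (hm : m ∉ I) (hdeg : mdeg m + 1 ≤ d) :
    m + Pi.single (lastv n) 1 ∉ I := by
  intro hmem
  obtain ⟨g, hg, hgle⟩ := exists_minGen hmem
  by_cases hgl : 0 < g (lastv n)
  · have h1 : Pi.single (secv n) (mdeg g) ∈ I := powSec_mem_of_gen hARL hg hgl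
    have h2 : mdeg g ≤ d := by
      have := mdeg_mono hgle
      have hadd : mdeg (m + Pi.single (lastv n) 1) = mdeg m + 1 := by
        simp [mdeg, Finset.sum_add_distrib]
      omega
    apply hnot
    apply hI _ h1
    intro i
    by_cases hi : i = secv n
    · subst hi; simpa using h2
    · simp [Pi.single_eq_of_ne hi]
  · apply hm
    apply hI g hg.1
    intro i
    by_cases hi : i = lastv n
    · subst hi; omega
    · have := hgle i
      simpa [Pi.single_eq_of_ne hi] using this

/-- Strict increase of the Hilbert function below the first pure power. -/
lemma hilb_step_up {I : Set (Fin (n + 2) → ℕ)} (hI : MonIdeal I) (hARL : ARL I)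
    {d : ℕ} (hd : 1 ≤ d) (hnot : Pi.single (secv n) d ∉ I) :
    hilb I (d - 1) < hilb I d := by
  classical
  set C1 : Set (Fin (n + 2) → ℕ) := {m | mdeg m = d - 1 ∧ m ∉ I} with hC1
  set C2 : Set (Fin (n + 2) → ℕ) := {m | mdeg m = d ∧ m ∉ I} with hC2
  have hfin1 : C1.Finite := hilbset_finite I (d - 1)
  have hfin2 : C2.Finite := hilbset_finite I d
  set ψ : (Fin (n + 2) → ℕ) → (Fin (n + 2) → ℕ) := fun m => m + Pi.single (lastv n) 1 with hψ
  have hψdeg : ∀ m : Fin (n + 2) → ℕ, mdeg (ψ m) = mdeg m + 1 := by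
    intro m; simp [hψ, mdeg, Finset.sum_add_distrib]
  have hψmem : ψ '' C1 ⊆ C2 := by
    rintro _ ⟨m, ⟨hmd, hmI⟩, rfl⟩
    refine ⟨by rw [hψdeg]; omega, ?_⟩
    exact add_last_notMem hI hARL hnot hmI (by omega)
  have hinj : Function.Injective ψ := add_left_injective _
  have hx2 : Pi.single (secv n) d ∈ C2 := ⟨mdeg_single _ _, hnot⟩
  have hxnot : Pi.single (secv n) d ∉ ψ '' C1 := by
    rintro ⟨m, -, heq⟩
    have := congrFun heq (lastv n)
    simp [hψ, Pi.single_eq_of_ne lastv_ne_secv] at this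
  have hsub : insert (Pi.single (secv n) d) (ψ '' C1) ⊆ C2 :=
    Set.insert_subset hx2 hψmem
  have hfinψ : (ψ '' C1).Finite := hfin2.subset hψmem
  calc hilb I (d - 1) = C1.ncard := rfl
    _ = (ψ '' C1).ncard := (Set.ncard_image_of_injective _ hinj).symm
    _ < (insert (Pi.single (secv n) d) (ψ '' C1)).ncard := by
        rw [Set.ncard_insert_of_notMem hxnot hfinψ]; omega
    _ ≤ C2.ncard := Set.ncard_le_ncard hsub hfin2
    _ = hilb I d := rfl

/-- Descent of the Hilbert function at the first pure power. -/
lemma hilb_step_down {I : Set (Fin (n + 2) → ℕ)} (hI : MonIdeal I) (hARL : ARL I)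
    {t₀ : ℕ} (ht₀mem : Pi.single (secv n) t₀ ∈ I)
    (hmin : ∀ a, a < t₀ → Pi.single (secv n) a ∉ I) (ht₀ : 1 ≤ t₀) :
    hilb I t₀ ≤ hilb I (t₀ - 1) := by
  classical
  -- x_sec^t₀ is a minimal generator
  have hgen : MinGen I (Pi.single (secv n) t₀) := by
    refine ⟨ht₀mem, ?_⟩
    intro m' hm' hle
    have h0 : ∀ i, i ≠ secv n → m' i = 0 := by
      intro i hi
      have := hle i
      rwa [Pi.single_eq_of_ne hi, Nat.le_zero] at this
    have hm'eq : m' = Pi.single (secv n) (m' (secv n)) := by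
      funext i
      by_cases hi : i = secv n
      · subst hi; simp
      · rw [Pi.single_eq_of_ne hi]; exact h0 i hi
    have hle' : m' (secv n) ≤ t₀ := by simpa using hle (secv n)
    have hge' : t₀ ≤ m' (secv n) := by
      by_contra h
      exact hmin _ (by omega) (hm'eq ▸ hm')
    have heq : m' (secv n) = t₀ := le_antisymm hle' hge'
    rw [hm'eq, heq]
  -- every degree-t₀ monomial with last coordinate 0 is in I
  have hfill : ∀ m : Fin (n + 2) → ℕ, mdeg m = t₀ → m (lastv n) = 0 → m ∈ I := by
    intro m hmd hml
    by_cases hm : m = Pi.single (secv n) t₀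
    · rw [hm]; exact ht₀mem
    · apply hARL m _ hgen (by rw [hmd, mdeg_single])
      right
      refine ⟨by rw [hmd, mdeg_single], secv n, ?_, ?_⟩
      · intro i hi
        have hieq : i = lastv n := by
          have h1 := i.isLt
          have h2 : (secv n).1 < i.1 := hi
          exact Fin.ext (by simp only [lastv]; simp only [secv] at h2; omega)
        rw [hieq, hml, Pi.single_eq_of_ne lastv_ne_secv]
      · rw [Pi.single_eq_same]
        have hle : m (secv n) ≤ t₀ := hmd ▸ coord_le_mdeg m (secv n)
        rcases lt_or_eq_of_le hle with h | h
        · exact h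
        · exfalso
          apply hm
          funext i
          by_cases hi : i = secv n
          · subst hi; simp [h]
          · rw [Pi.single_eq_of_ne hi]
            have hsum : m (secv n) + ∑ j ∈ Finset.univ.erase (secv n), m j = mdeg m :=
              Finset.add_sum_erase _ m (Finset.mem_univ _)
            have hz : ∑ j ∈ Finset.univ.erase (secv n), m j = 0 := by omega
            exact Finset.sum_eq_zero_iff.mp hz i (Finset.mem_erase.mpr ⟨hi, Finset.mem_univ _⟩)
  set C1 : Set (Fin (n + 2) → ℕ) := {m | mdeg m = t₀ - 1 ∧ m ∉ I} with hC1
  set C2 : Set (Fin (n + 2) → ℕ) := {m | mdeg m = t₀ ∧ m ∉ I} with hC2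
  have hfin1 : C1.Finite := hilbset_finite I (t₀ - 1)
  have hpos : ∀ m ∈ C2, 0 < m (lastv n) := by
    rintro m ⟨hmd, hmI⟩
    by_contra h
    exact hmI (hfill m hmd (by omega))
  set φ : (Fin (n + 2) → ℕ) → (Fin (n + 2) → ℕ) :=
    fun m i => if i = lastv n then m i - 1 else m i with hφ
  have hφdeg : ∀ m ∈ C2, mdeg (φ m) = t₀ - 1 := by
    rintro m hm
    obtain ⟨hmd, -⟩ := id hm
    have hml := hpos m hm
    have h1 : φ m (lastv n) + ∑ j ∈ Finset.univ.erase (lastv n), φ m j = mdeg (φ m) :=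
      Finset.add_sum_erase _ (φ m) (Finset.mem_univ _)
    have h2 : m (lastv n) + ∑ j ∈ Finset.univ.erase (lastv n), m j = mdeg m :=
      Finset.add_sum_erase _ m (Finset.mem_univ _)
    have h3 : ∑ j ∈ Finset.univ.erase (lastv n), φ m j
        = ∑ j ∈ Finset.univ.erase (lastv n), m j :=
      Finset.sum_congr rfl fun i hi => by
        simp [hφ, (Finset.mem_erase.mp hi).1]
    have h4 : φ m (lastv n) = m (lastv n) - 1 := by simp [hφ]
    omega
  have hφmem : φ '' C2 ⊆ C1 := by
    rintro _ ⟨m, hm, rfl⟩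
    refine ⟨hφdeg m hm, ?_⟩
    intro hmem
    apply hm.2
    apply hI _ hmem m
    intro i
    by_cases hi : i = lastv n
    · subst hi; simp [hφ]
    · simp [hφ, hi]
  have hinj : Set.InjOn φ C2 := by
    intro a ha b hb heq
    funext i
    have hcf := congrFun heq i
    by_cases hi : i = lastv n
    · subst hi
      have h1 := hpos a ha
      have h2 := hpos b hb
      simp only [hφ, if_pos rfl] at hcf
      omega
    · simpa [hφ, hi] using hcf
  calc hilb I t₀ = C2.ncard := rfl
    _ = (φ '' C2).ncard := (Set.ncard_image_of_injOn hinj).symm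
    _ ≤ C1.ncard := Set.ncard_le_ncard hφmem hfin1
    _ = hilb I (t₀ - 1) := rfl

end ArlMain


/-- `min{t : x_{n-1}^t ∈ I} = min{d : H(R/I,d) ≤ H(R/I,d-1)}`. -/
theorem arl_f_eq_first_descent {n : ℕ} (I : Set (Fin (n + 2) → ℕ))
    (hI : MonIdeal I) (hARL : ARL I)
    (W : Fin (n + 2) → ℕ) (hW : IsLastGen I W) (hWn : maxVar W = n + 2) :
    sInf {t | Pi.single (⟨n, by omega⟩ : Fin (n + 2)) t ∈ I} =
      sInf {d | 1 ≤ d ∧ hilb I d ≤ hilb I (d - 1)} := by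
  classical
  show sInf {t | Pi.single (secv n) t ∈ I} = sInf {d | 1 ≤ d ∧ hilb I d ≤ hilb I (d - 1)}
  set S : Set ℕ := {t | Pi.single (secv n) t ∈ I} with hS
  set D : Set ℕ := {d | 1 ≤ d ∧ hilb I d ≤ hilb I (d - 1)} with hD
  -- 0 ∉ I
  have h0 : (0 : Fin (n + 2) → ℕ) ∉ I := by
    intro h
    have hWeq : (0 : Fin (n + 2) → ℕ) = W := hW.1.2 0 h fun i => Nat.zero_le _
    have : maxVar W = 0 := by
      rw [← hWeq]
      simp [maxVar]
    omega
  rcases Set.eq_empty_or_nonempty S with hSe | hSne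
  · have hDe : D = ∅ := by
      ext d
      simp only [hD, Set.mem_setOf_eq, Set.mem_empty_iff_false, iff_false, not_and, not_le]
      intro hd1
      have hnot : Pi.single (secv n) d ∉ I := fun h =>
        Set.eq_empty_iff_forall_notMem.mp hSe d h
      exact hilb_step_up hI hARL hd1 hnot
    rw [hSe, hDe]
  · have ht₀mem : Pi.single (secv n) (sInf S) ∈ I := Nat.sInf_mem hSne
    have hmin : ∀ a, a < sInf S → Pi.single (secv n) a ∉ I := by
      intro a ha hmem
      exact absurd (Nat.sInf_le (show a ∈ S from hmem)) (by omega)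
    have ht₀pos : 1 ≤ sInf S := by
      rcases Nat.eq_zero_or_pos (sInf S) with h | h
      · exfalso
        apply h0
        have := ht₀mem
        rwa [h, Pi.single_zero] at this
      · exact h
    have ht₀D : sInf S ∈ D := ⟨ht₀pos, hilb_step_down hI hARL ht₀mem hmin ht₀pos⟩
    have hDne : D.Nonempty := ⟨sInf S, ht₀D⟩
    have h1 : sInf D ≤ sInf S := Nat.sInf_le ht₀D
    have h2 : sInf S ≤ sInf D := by
      obtain ⟨hd1, hdesc⟩ := Nat.sInf_mem hDne
      by_contra h
      have hnot : Pi.single (secv n) (sInf D) ∉ I := hmin _ (by omega)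
      exact absurd hdesc (not_le.mpr (hilb_step_up hI hARL hd1 hnot))
    omega
end

section
/- Let I be an almost reverse lexicographic ideal in R = k[x_1,...,x_n] with max M_ω(I) = n. Then for every d ≥ 0, H(R/(I + (x_n)), d) = max{0, H(R/I,d) - H(R/I,d-1)}. -/
open scoped Classical

section Aux

lemma mdeg_add_single {n : ℕ} (m : Fin n → ℕ) (i : Fin n) (t : ℕ) :
    mdeg (m + Pi.single i t) = mdeg m + t := by
  simp [mdeg, Finset.sum_add_distrib, Pi.single_apply]

lemma mdeg_le_of_le {n : ℕ} {a b : Fin n → ℕ} (h : ∀ i, a i ≤ b i) :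
    mdeg a ≤ mdeg b :=
  Finset.sum_le_sum fun i _ => h i

lemma eq_of_le_of_mdeg_eq {n : ℕ} {a b : Fin n → ℕ} (h : ∀ i, a i ≤ b i)
    (hd : mdeg a = mdeg b) : a = b := by
  by_contra hne
  have : ∃ i, a i ≠ b i := by
    by_contra hc; push_neg at hc; exact hne (funext hc)
  obtain ⟨i, hi⟩ := this
  have : mdeg a < mdeg b :=
    Finset.sum_lt_sum (fun j _ => h j) ⟨i, Finset.mem_univ i, lt_of_le_of_ne (h i) hi⟩
  omega

lemma deg_set_finite (n d : ℕ) : {m : Fin n → ℕ | mdeg m = d}.Finite := by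
  apply Set.Finite.subset (Set.Finite.pi (fun i : Fin n => Set.finite_Iic d))
  intro m hm
  simp only [Set.mem_pi, Set.mem_univ, Set.mem_Iic, forall_true_left]
  intro i
  have h1 : m i ≤ mdeg m := Finset.single_le_sum (fun j _ => Nat.zero_le _) (Finset.mem_univ i)
  exact h1.trans_eq hm

lemma shrink {n : ℕ} : ∀ (t : ℕ) (v : Fin n → ℕ) (e : ℕ), mdeg v = e + t →
    ∃ w : Fin n → ℕ, (∀ i, w i ≤ v i) ∧ mdeg w = e := by
  intro t
  induction t with
  | zero => intro v e h; exact ⟨v, fun i => le_rfl, by omega⟩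
  | succ t ih =>
    intro v e h
    have hpos : ∃ i, 0 < v i := by
      by_contra hc; push_neg at hc
      have : mdeg v = 0 := Finset.sum_eq_zero fun i _ => Nat.le_zero.mp (hc i)
      omega
    obtain ⟨i, hi⟩ := hpos
    have hmem : i ∈ Finset.univ := Finset.mem_univ i
    set v' := Function.update v i (v i - 1) with hv'
    have hle : ∀ j, v' j ≤ v j := by
      intro j; by_cases hj : j = i <;> simp [hv', Function.update_apply, hj]
    have hdeg : mdeg v' = e + t := by
      have := Finset.sum_update_of_mem (f := v) (b := v i - 1) hmem
      have h2 : mdeg v = v i + ∑ j ∈ Finset.univ \ {i}, v j := by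
        rw [mdeg, ← Finset.sum_eq_add_sum_sdiff_singleton_of_mem hmem]
      simp only [mdeg, hv', this]
      omega
    obtain ⟨w, hw1, hw2⟩ := ih v' e hdeg
    exact ⟨w, fun j => le_trans (hw1 j) (hle j), hw2⟩

lemma exists_minGen_le {n : ℕ} {I : Set (Fin n → ℕ)} {c : Fin n → ℕ}
    (hc : c ∈ I) : ∃ g, MinGen I g ∧ ∀ i, g i ≤ c i := by
  classical
  set S : Set ℕ := {k | ∃ g ∈ I, (∀ i, g i ≤ c i) ∧ mdeg g = k} with hS
  have hne : S.Nonempty := ⟨mdeg c, c, hc, fun i => le_rfl, rfl⟩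
  obtain ⟨g, hgI, hgle, hgdeg⟩ := Nat.sInf_mem hne
  refine ⟨g, ⟨hgI, ?_⟩, hgle⟩
  intro m' hm' hle
  have hmem : mdeg m' ∈ S := ⟨m', hm', fun i => le_trans (hle i) (hgle i), rfl⟩
  have h1 : sInf S ≤ mdeg m' := Nat.sInf_le hmem
  have h2 : mdeg m' ≤ mdeg g := mdeg_le_of_le hle
  exact eq_of_le_of_mdeg_eq hle (by omega)

lemma revLexGT_of_last_lt {n : ℕ} {M N : Fin (n + 1) → ℕ}
    (hdeg : mdeg M = mdeg N) (h : M (Fin.last n) < N (Fin.last n)) : RevLexGT M N := by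
  refine Or.inr ⟨hdeg, Fin.last n, ?_, h⟩
  intro i hi
  exact absurd hi (not_lt.mpr (Fin.le_last i))

end Aux

/-- `H(R/(I+(x_n)), d) = max{0, H(R/I,d) - H(R/I,d-1)}` for all `d ≥ 0`. -/
theorem arl_hilbert_quotient_by_last_variable {n : ℕ} (I : Set (Fin (n + 1) → ℕ))
    (hI : MonIdeal I) (hARL : ARL I)
    (W : Fin (n + 1) → ℕ) (hW : IsLastGen I W) (hWn : maxVar W = n + 1)
    (d : ℕ) :
    Set.ncard {m : Fin (n + 1) → ℕ | mdeg m = d ∧ m ∉ I ∧ m (Fin.last n) = 0} =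
      hilb I d - (match d with | 0 => 0 | e + 1 => hilb I e) := by
  classical
  match d with
  | 0 =>
    have hset : {m : Fin (n + 1) → ℕ | mdeg m = 0 ∧ m ∉ I ∧ m (Fin.last n) = 0} =
        {m : Fin (n + 1) → ℕ | mdeg m = 0 ∧ m ∉ I} := by
      ext m
      simp only [Set.mem_setOf_eq, and_congr_right_iff]
      intro hm
      have hlast : m (Fin.last n) = 0 := by
        have : m (Fin.last n) ≤ mdeg m :=
          Finset.single_le_sum (fun j _ => Nat.zero_le _) (Finset.mem_univ _)
        omega
      simp [hlast]
    rw [hset]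
    simp [hilb]
  | e + 1 =>
    set L := Fin.last n with hL
    set A := {m : Fin (n + 1) → ℕ | mdeg m = e + 1 ∧ m ∉ I ∧ m L = 0} with hA
    set P := {m : Fin (n + 1) → ℕ | mdeg m = e + 1 ∧ m ∉ I ∧ 0 < m L} with hP
    set B := {m : Fin (n + 1) → ℕ | mdeg m = e + 1 ∧ m ∉ I} with hB
    set Be := {m : Fin (n + 1) → ℕ | mdeg m = e ∧ m ∉ I} with hBe
    have hfinB : B.Finite :=
      (deg_set_finite (n + 1) (e + 1)).subset (fun m hm => hm.1)
    have hfinBe : Be.Finite :=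
      (deg_set_finite (n + 1) e).subset (fun m hm => hm.1)
    have hfinA : A.Finite := hfinB.subset (fun m hm => ⟨hm.1, hm.2.1⟩)
    have hfinP : P.Finite := hfinB.subset (fun m hm => ⟨hm.1, hm.2.1⟩)
    have hunion : A ∪ P = B := by
      ext m
      simp only [hA, hP, hB, Set.mem_union, Set.mem_setOf_eq]
      constructor
      · rintro (⟨h1, h2, _⟩ | ⟨h1, h2, _⟩) <;> exact ⟨h1, h2⟩
      · rintro ⟨h1, h2⟩
        rcases Nat.eq_zero_or_pos (m L) with h | h
        · exact Or.inl ⟨h1, h2, h⟩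
        · exact Or.inr ⟨h1, h2, h⟩
    have hdisj : Disjoint A P := by
      rw [Set.disjoint_left]
      rintro m ⟨_, _, h0⟩ ⟨_, _, hpos⟩
      omega
    have hsum : A.ncard + P.ncard = B.ncard := by
      rw [← Set.ncard_union_eq hdisj hfinA hfinP, hunion]
    have hilbB : hilb I (e + 1) = B.ncard := rfl
    have hilbBe : hilb I e = Be.ncard := rfl
    show A.ncard = hilb I (e + 1) - hilb I e
    by_cases hsurj : ∀ m : Fin (n + 1) → ℕ, mdeg m = e → m ∉ I →
        m + Pi.single L 1 ∉ I
    · -- surjective case : P ≃ Be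
      have himg : (fun m : Fin (n + 1) → ℕ => m + Pi.single L 1) '' Be = P := by
        ext p
        constructor
        · rintro ⟨m, ⟨hm1, hm2⟩, rfl⟩
          refine ⟨by rw [mdeg_add_single, hm1], hsurj m hm1 hm2, ?_⟩
          simp
        · rintro ⟨hp1, hp2, hp3⟩
          refine ⟨fun i => if i = L then p i - 1 else p i, ⟨?_, ?_⟩, ?_⟩
          · have hkey : (fun i => if i = L then p i - 1 else p i) + Pi.single L 1 = p := by
              funext i
              by_cases hi : i = L <;> simp [hi, Pi.single_apply] <;> omega
            have := mdeg_add_single (fun i => if i = L then p i - 1 else p i) L 1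
            rw [hkey] at this
            omega
          · intro hcon
            exact hp2 (hI _ hcon p (fun i => by by_cases hi : i = L <;> simp [hi] <;> omega))
          · funext i
            by_cases hi : i = L <;> simp [hi, Pi.single_apply] <;> omega
      have hinj : Set.InjOn (fun m : Fin (n + 1) → ℕ => m + Pi.single L 1) Be := by
        intro a _ b _ hab
        exact add_right_cancel hab
      have hcard : P.ncard = Be.ncard := by
        rw [← himg, Set.ncard_image_of_injOn hinj]
      rw [hilbB, hilbBe]
      omega
    · -- failure case : A = ∅ and hilb drops
      push_neg at hsurj
      obtain ⟨m, hm1, hm2, hm3⟩ := hsurj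
      obtain ⟨g, hgMin, hgle⟩ := exists_minGen_le hm3
      have hglast : 0 < g L := by
        by_contra hc
        push_neg at hc
        apply hm2
        refine hI g hgMin.1 m (fun i => ?_)
        by_cases hi : i = L
        · subst hi; omega
        · have := hgle i
          simpa [Pi.single_apply, hi] using this
      have hgdeg : mdeg g ≤ e + 1 := by
        have := mdeg_le_of_le hgle
        rw [mdeg_add_single, hm1] at this
        exact this
      -- every degree (e+1) monomial with last coordinate 0 lies in I
      have hAempty : A = ∅ := by
        rw [Set.eq_empty_iff_forall_notMem]
        rintro N ⟨hN1, hN2, hN3⟩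
        obtain ⟨N', hN'le, hN'deg⟩ := shrink (e + 1 - mdeg g) N (mdeg g) (by omega)
        have hN'last : N' L = 0 := by
          have := hN'le L
          omega
        have hGT : RevLexGT N' g :=
          revLexGT_of_last_lt hN'deg (by rw [← hL]; omega)
        have hN'I : N' ∈ I := hARL N' g hgMin hN'deg hGT
        exact hN2 (hI N' hN'I N hN'le)
      -- injection B ↪ Be by subtracting one from the last coordinate
      have hBpos : ∀ p ∈ B, 0 < p L := by
        intro p hp
        rcases Nat.eq_zero_or_pos (p L) with h | h
        · exact absurd (show p ∈ A from ⟨hp.1, hp.2, h⟩) (by rw [hAempty]; simp)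
        · exact h
      set f : (Fin (n + 1) → ℕ) → (Fin (n + 1) → ℕ) :=
        fun p i => if i = L then p i - 1 else p i with hf
      have hmaps : f '' B ⊆ Be := by
        rintro q ⟨p, hp, rfl⟩
        have hppos := hBpos p hp
        have hkey : f p + Pi.single L 1 = p := by
          funext i
          by_cases hi : i = L <;> simp [hf, hi, Pi.single_apply] <;> omega
        constructor
        · have := mdeg_add_single (f p) L 1
          rw [hkey] at this
          have := hp.1
          omega
        · intro hcon
          exact hp.2 (hI _ hcon p (fun i => by by_cases hi : i = L <;> simp [hf, hi] <;> omega))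
      have hinj : Set.InjOn f B := by
        intro a ha b hb hab
        have hal := hBpos a ha
        have hbl := hBpos b hb
        funext i
        have := congrFun hab i
        by_cases hi : i = L
        · subst hi; simp [hf] at this; omega
        · simpa [hf, hi] using this
      have hle : B.ncard ≤ Be.ncard := by
        calc B.ncard = (f '' B).ncard := (Set.ncard_image_of_injOn hinj).symm
          _ ≤ Be.ncard := Set.ncard_le_ncard hmaps hfinBe
      have : A.ncard = 0 := by rw [hAempty]; simp
      rw [hilbB, hilbBe]
      omega
end
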